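/- arXiv:1305.2543 — 2 statements merged into one kernel-verified Lean document; each statement's English description precedes it below -/
import Mathlib

section
/- Let k, t be positive integers with t ≤ k and gcd(k, t) = 1. Then the number of orbits of size exactly k of the shift map on t-element subsets of ZMod k equals (1/t)·C(k−1, t−1), and every orbit has size exactly k, so the number of t-element subsets of ZMod k equals k·(1/t)·C(k−1,t−1), i.e., C(k,t). -/
/-- The shift map on finsets of `ZMod m`. -/
def sh (m : ℕ) (A : Finset (ZMod m)) : Finset (ZMod m) := A.image (· + 1)

/-- The orbit of a finset `A` of `ZMod m` under the shift map (note `(sh m)^[m] = id`). -/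
def shOrbit (m : ℕ) [NeZero m] (A : Finset (ZMod m)) : Finset (Finset (ZMod m)) :=
  (Finset.range m).image (fun i => (sh m)^[i] A)

/-- The number of orbits of size exactly `k` of the shift map on `d`-element subsets
of `ZMod m`. -/
def norb (m d k : ℕ) [NeZero m] : ℕ :=
  (((Finset.univ.filter (fun A : Finset (ZMod m) => A.card = d)).image
      (shOrbit m)).filter (fun O => O.card = k)).card

lemma sh_iterate (m : ℕ) (A : Finset (ZMod m)) (i : ℕ) :
    (sh m)^[i] A = A.image (· + (i : ZMod m)) := by
  induction i with
  | zero => simp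
  | succ n ih =>
    rw [Function.iterate_succ_apply', ih, sh, Finset.image_image]
    ext x
    simp only [Finset.mem_image, Function.comp_apply, Nat.cast_succ]
    constructor
    · rintro ⟨a, ha, rfl⟩; exact ⟨a, ha, by ring⟩
    · rintro ⟨a, ha, rfl⟩; exact ⟨a, ha, by ring⟩

lemma sh_iterate_card (m : ℕ) (A : Finset (ZMod m)) (i : ℕ) :
    ((sh m)^[i] A).card = A.card := by
  rw [sh_iterate]
  exact Finset.card_image_of_injective _ (add_left_injective _)

lemma sh_periodic (k : ℕ) [NeZero k] (A : Finset (ZMod k)) : (sh k)^[k] A = A := by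
  rw [sh_iterate]
  simp [ZMod.natCast_self]

lemma sh_iterate_mul (k : ℕ) [NeZero k] (q : ℕ) (A : Finset (ZMod k)) :
    (sh k)^[k * q] A = A := by
  rw [Function.iterate_mul]
  exact Function.iterate_fixed (sh_periodic k A) q

lemma sh_iterate_mod (k : ℕ) [NeZero k] (i : ℕ) (A : Finset (ZMod k)) :
    (sh k)^[i] A = (sh k)^[i % k] A := by
  conv_lhs => rw [← Nat.div_add_mod i k]
  rw [Function.iterate_add_apply, sh_iterate_mul]

lemma mem_shOrbit {k : ℕ} [NeZero k] {A B : Finset (ZMod k)} :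
    B ∈ shOrbit k A ↔ ∃ i, (sh k)^[i] A = B := by
  simp only [shOrbit, Finset.mem_image, Finset.mem_range]
  constructor
  · rintro ⟨i, _, h⟩; exact ⟨i, h⟩
  · rintro ⟨i, h⟩
    exact ⟨i % k, Nat.mod_lt _ (Nat.pos_of_ne_zero (NeZero.ne k)),
      by rw [← sh_iterate_mod]; exact h⟩

lemma shOrbit_iterate {k : ℕ} [NeZero k] (A : Finset (ZMod k)) (i : ℕ) :
    shOrbit k ((sh k)^[i] A) = shOrbit k A := by
  have hk : 0 < k := Nat.pos_of_ne_zero (NeZero.ne k)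
  ext B
  simp only [mem_shOrbit]
  constructor
  · rintro ⟨j, rfl⟩
    exact ⟨j + i, by rw [Function.iterate_add_apply]⟩
  · rintro ⟨j, rfl⟩
    refine ⟨j + (k - i % k), ?_⟩
    have key : k - i % k + i = k * (1 + i / k) := by
      have h1 : i % k < k := Nat.mod_lt _ hk
      have h2 : k * (i / k) + i % k = i := Nat.div_add_mod i k
      have : k * (1 + i / k) = k + k * (i / k) := by ring
      omega
    calc (sh k)^[j + (k - i % k)] ((sh k)^[i] A)
        = (sh k)^[j] ((sh k)^[k - i % k + i] A) := by
          rw [← Function.iterate_add_apply, ← Function.iterate_add_apply, add_assoc]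
      _ = (sh k)^[j] A := by rw [key, sh_iterate_mul]

lemma addOrderOf_dvd_card_of_invariant {k : ℕ} [NeZero k] {c : ZMod k}
    {A : Finset (ZMod k)} (hA : A.image (· + c) = A) : addOrderOf c ∣ A.card := by
  classical
  set n := addOrderOf c with hn
  have hnpos : 0 < n := addOrderOf_pos c
  have hinv : ∀ j : ℕ, ∀ a ∈ A, a + j • c ∈ A := by
    intro j
    induction j with
    | zero => simp
    | succ m ih =>
      intro a ha
      have h1 : a + m • c ∈ A := ih a ha
      have h2 : (a + m • c) + c ∈ A := by
        rw [← hA]; exact Finset.mem_image_of_mem _ h1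
      rw [succ_nsmul, ← add_assoc]
      exact h2
  set f : ZMod k → ZMod k ⧸ AddSubgroup.zmultiples c := QuotientAddGroup.mk with hf
  have hcard := Finset.card_eq_sum_card_image f A
  have hfib : ∀ q ∈ A.image f, (A.filter (fun a => f a = q)).card = n := by
    intro q hq
    obtain ⟨a, ha, rfl⟩ := Finset.mem_image.mp hq
    have heq : A.filter (fun x => f x = f a) = (Finset.range n).image (fun j => a + j • c) := by
      ext x
      simp only [Finset.mem_filter, Finset.mem_image, Finset.mem_range]
      constructor
      · rintro ⟨hx, hfx⟩
        have hmem : -a + x ∈ AddSubgroup.zmultiples c := by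
          rw [← QuotientAddGroup.eq]
          exact hfx.symm
        obtain ⟨z, hz⟩ := AddSubgroup.mem_zmultiples_iff.mp hmem
        refine ⟨(z % (n : ℤ)).toNat, ?_, ?_⟩
        · have h1 : (0:ℤ) ≤ z % n := Int.emod_nonneg z (by exact_mod_cast hnpos.ne')
          have h2 : z % (n:ℤ) < n := Int.emod_lt_of_pos z (by exact_mod_cast hnpos)
          omega
        · have h1 : (0:ℤ) ≤ z % n := Int.emod_nonneg z (by exact_mod_cast hnpos.ne')
          have : ((z % (n:ℤ)).toNat : ℕ) • c = z • c := by
            rw [← natCast_zsmul, Int.toNat_of_nonneg h1, hn, mod_addOrderOf_zsmul]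
          rw [this, hz]
          abel
      · rintro ⟨j, hj, rfl⟩
        refine ⟨hinv j a ha, ?_⟩
        rw [hf]
        rw [QuotientAddGroup.eq]
        refine AddSubgroup.mem_zmultiples_iff.mpr ⟨-(j:ℤ), ?_⟩
        simp [natCast_zsmul]
    rw [heq, Finset.card_image_of_injOn, Finset.card_range]
    intro i hi j hj hij
    simp only [Finset.coe_range, Set.mem_Iio] at hi hj
    have : i • c = j • c := by
      have := hij
      simpa using add_left_cancel this
    exact nsmul_injOn_Iio_addOrderOf (by simpa [hn] using hi) (by simpa [hn] using hj) this
  rw [hcard, Finset.sum_congr rfl hfib, Finset.sum_const, smul_eq_mul]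
  exact dvd_mul_left n _

lemma minPeriod_eq {k t : ℕ} [NeZero k] (hco : Nat.gcd k t = 1)
    (A : Finset (ZMod k)) (hAt : A.card = t) : Function.minimalPeriod (sh k) A = k := by
  have hk : 0 < k := Nat.pos_of_ne_zero (NeZero.ne k)
  have hper : Function.IsPeriodicPt (sh k) k A := sh_periodic k A
  set d := Function.minimalPeriod (sh k) A with hd
  have hdvd : d ∣ k := Function.IsPeriodicPt.minimalPeriod_dvd hper
  have hAd : A.image (· + (d : ZMod k)) = A := by
    rw [← sh_iterate]
    exact Function.isPeriodicPt_minimalPeriod (sh k) A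
  have h1 : addOrderOf ((d : ℕ) : ZMod k) ∣ t := hAt ▸ addOrderOf_dvd_card_of_invariant hAd
  have h2 : addOrderOf ((d : ℕ) : ZMod k) ∣ k := by
    have := addOrderOf_dvd_card (x := ((d : ℕ) : ZMod k))
    rwa [ZMod.card] at this
  have h3 : addOrderOf ((d : ℕ) : ZMod k) = 1 :=
    Nat.dvd_one.mp (hco ▸ Nat.dvd_gcd h2 h1)
  have h4 : ((d : ℕ) : ZMod k) = 0 := AddMonoid.addOrderOf_eq_one_iff.mp h3
  have h5 : k ∣ d := (ZMod.natCast_eq_zero_iff d k).mp h4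
  exact Nat.dvd_antisymm hdvd h5

lemma shOrbit_card {k : ℕ} [NeZero k] {A : Finset (ZMod k)}
    (hmin : Function.minimalPeriod (sh k) A = k) : (shOrbit k A).card = k := by
  rw [shOrbit, Finset.card_image_of_injOn, Finset.card_range]
  intro i hi j hj hij
  simp only [Finset.coe_range, Set.mem_Iio] at hi hj
  exact Function.iterate_injOn_Iio_minimalPeriod (by rw [hmin]; exact hi)
    (by rw [hmin]; exact hj) hij

/-- When `gcd(k,t) = 1`: the number of orbits of size exactly `k` equals
`(1/t)·C(k−1,t−1)`, every orbit has size exactly `k`, and hence the total number of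
`t`-subsets is `k·(1/t)·C(k−1,t−1) = C(k,t)`. -/
theorem norb_coprime (k t : ℕ) [NeZero k] (ht : 0 < t) (htk : t ≤ k)
    (hco : Nat.gcd k t = 1) :
    norb k t k = Nat.choose (k - 1) (t - 1) / t ∧
    (∀ A : Finset (ZMod k), A.card = t → Function.minimalPeriod (sh k) A = k) ∧
    k * (Nat.choose (k - 1) (t - 1) / t) = Nat.choose k t := by
  classical
  have hk : 0 < k := Nat.pos_of_ne_zero (NeZero.ne k)
  set S := Finset.univ.filter (fun A : Finset (ZMod k) => A.card = t) with hSdef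
  have hS : S.card = Nat.choose k t := by
    rw [hSdef, ← Finset.powerset_univ, ← Finset.powersetCard_eq_filter,
      Finset.card_powersetCard, Finset.card_univ, ZMod.card]
  have hmem : ∀ A ∈ S, A.card = t := fun A hA => (Finset.mem_filter.mp hA).2
  have himg : ∀ O ∈ S.image (shOrbit k), O.card = k := by
    rintro O hO
    obtain ⟨A, hA, rfl⟩ := Finset.mem_image.mp hO
    exact shOrbit_card (minPeriod_eq hco A (hmem A hA))
  have hnorb : norb k t k = (S.image (shOrbit k)).card := by
    rw [norb]
    congr 1
    exact Finset.filter_true_of_mem himg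
  have hfib : ∀ O ∈ S.image (shOrbit k),
      (S.filter (fun A => shOrbit k A = O)).card = k := by
    rintro O hO
    obtain ⟨A₀, hA₀, rfl⟩ := Finset.mem_image.mp hO
    have heq : S.filter (fun A => shOrbit k A = shOrbit k A₀) = shOrbit k A₀ := by
      ext B
      simp only [Finset.mem_filter]
      constructor
      · rintro ⟨hB, hBeq⟩
        rw [← hBeq]
        exact mem_shOrbit.mpr ⟨0, rfl⟩
      · intro hB
        obtain ⟨i, rfl⟩ := mem_shOrbit.mp hB
        refine ⟨?_, shOrbit_iterate A₀ i⟩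
        rw [hSdef, Finset.mem_filter]
        exact ⟨Finset.mem_univ _, by rw [sh_iterate_card]; exact hmem A₀ hA₀⟩
    rw [heq]
    exact shOrbit_card (minPeriod_eq hco A₀ (hmem A₀ hA₀))
  have hcount : S.card = (S.image (shOrbit k)).card * k := by
    rw [Finset.card_eq_sum_card_image (shOrbit k) S,
      Finset.sum_congr rfl hfib, Finset.sum_const, smul_eq_mul]
  set N := (S.image (shOrbit k)).card with hN
  have hNk : N * k = Nat.choose k t := by rw [← hcount, hS]
  have hid : k * Nat.choose (k - 1) (t - 1) = Nat.choose k t * t := by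
    have := Nat.add_one_mul_choose_eq (k - 1) (t - 1)
    simp only [Nat.succ_eq_add_one, Nat.sub_add_cancel hk, Nat.sub_add_cancel ht] at this
    exact this
  have hNt : Nat.choose (k - 1) (t - 1) = N * t := by
    have h := hid
    rw [← hNk] at h
    have : k * Nat.choose (k - 1) (t - 1) = k * (N * t) := by rw [h]; ring
    exact Nat.eq_of_mul_eq_mul_left hk this
  have hdiv : Nat.choose (k - 1) (t - 1) / t = N := by
    rw [hNt, Nat.mul_div_cancel _ ht]
  refine ⟨by rw [hnorb, hdiv], fun A hA => minPeriod_eq hco A hA, ?_⟩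
  rw [hdiv, ← hNk]; ring
end

section
/- Let k, t, a be positive integers with t ≤ k, a dividing gcd(k, t). The map sending a subset A of ZMod k to its image under reduction modulo k/a gives a bijection between the set of t-element subsets A of ZMod k with 0 ∈ A invariant under translation by k/a, and the set of t/a-element subsets of ZMod (k/a) containing 0. -/
lemma fiber_card (k m a : ℕ) [NeZero k] (hm : 0 < m) (ha : 0 < a) (hk : k = m * a)
    (hdvd : m ∣ k) (b : ZMod m) :
    (Finset.univ.filter (fun x : ZMod k => ZMod.castHom hdvd (ZMod m) x = b)).card = a := by
  haveI : NeZero m := ⟨hm.ne'⟩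
  rw [← Finset.card_range a]
  apply Finset.card_bij' (fun x _ => x.val / m) (fun j _ => ((b.val + j * m : ℕ) : ZMod k))
  · intro x hx
    simp only [Finset.mem_filter, Finset.mem_univ, true_and] at hx
    rw [Finset.mem_range]
    have hv : x.val < m * a := by rw [← hk]; exact ZMod.val_lt x
    exact Nat.div_lt_of_lt_mul (by omega)
  · intro j hj
    rw [Finset.mem_range] at hj
    simp only [Finset.mem_filter, Finset.mem_univ, true_and, map_natCast]
    push_cast
    rw [ZMod.natCast_self, mul_zero, add_zero, ZMod.natCast_zmod_val]
  · intro x hx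
    simp only [Finset.mem_filter, Finset.mem_univ, true_and] at hx
    have h1 : ZMod.castHom hdvd (ZMod m) x = ((x.val : ℕ) : ZMod m) := by
      conv_lhs => rw [← ZMod.natCast_zmod_val x]
      rw [map_natCast]
    rw [h1] at hx
    have hb : b.val = x.val % m := by rw [← hx, ZMod.val_natCast]
    rw [hb, Nat.mod_add_div', ZMod.natCast_zmod_val]
  · intro j hj
    rw [Finset.mem_range] at hj
    have hlt : b.val + j * m < k := by
      have := ZMod.val_lt b
      rw [hk]; nlinarith
    rw [ZMod.val_natCast, Nat.mod_eq_of_lt hlt, Nat.add_mul_div_right _ _ hm,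
      Nat.div_eq_of_lt (ZMod.val_lt b), zero_add]

lemma count_filter (k m a : ℕ) [NeZero k] (hm : 0 < m) (ha : 0 < a) (hk : k = m * a)
    (hdvd : m ∣ k) (S : Finset (ZMod m)) :
    (Finset.univ.filter (fun x : ZMod k => ZMod.castHom hdvd (ZMod m) x ∈ S)).card
      = a * S.card := by
  classical
  have : Finset.univ.filter (fun x : ZMod k => ZMod.castHom hdvd (ZMod m) x ∈ S)
      = S.biUnion (fun b => Finset.univ.filter (fun x : ZMod k =>
          ZMod.castHom hdvd (ZMod m) x = b)) := by
    ext x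
    simp only [Finset.mem_biUnion, Finset.mem_filter, Finset.mem_univ, true_and]
    exact ⟨fun h => ⟨_, h, rfl⟩, fun ⟨b, hb, h⟩ => h ▸ hb⟩
  rw [this, Finset.card_biUnion]
  · rw [Finset.sum_congr rfl (fun b _ => fiber_card k m a hm ha hk hdvd b)]
    simp [mul_comm]
  · intro b1 _ b2 _ hne
    simp only [Finset.disjoint_left, Finset.mem_filter]
    rintro x ⟨_, h1⟩ ⟨_, h2⟩
    exact hne (h1 ▸ h2 ▸ rfl)

lemma closure_lemma (k m : ℕ) [NeZero k] (A : Finset (ZMod k))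
    (hA : A.image (· + ((m : ℕ) : ZMod k)) = A) :
    ∀ j : ℕ, ∀ x ∈ A, x + ((j * m : ℕ) : ZMod k) ∈ A := by
  intro j
  induction j with
  | zero => simp
  | succ n ih =>
    intro x hx
    have h1 := ih x hx
    have h2 : (x + ((n * m : ℕ) : ZMod k)) + ((m : ℕ) : ZMod k) ∈ A := by
      rw [← hA]
      exact Finset.mem_image_of_mem _ h1
    have : x + (((n + 1) * m : ℕ) : ZMod k)
        = (x + ((n * m : ℕ) : ZMod k)) + ((m : ℕ) : ZMod k) := by
      push_cast; ring
    rwa [this]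

lemma fiber_mem (k m a : ℕ) [NeZero k] (hm : 0 < m) (hk : k = m * a) (hdvd : m ∣ k)
    (A : Finset (ZMod k)) (hA : A.image (· + ((m : ℕ) : ZMod k)) = A)
    {x y : ZMod k} (hx : x ∈ A) (hxy : ZMod.castHom hdvd (ZMod m) x = ZMod.castHom hdvd (ZMod m) y) :
    y ∈ A := by
  haveI : NeZero m := ⟨hm.ne'⟩
  set c := x.val with hc
  set d := y.val with hd
  have hcx : ((c : ℕ) : ZMod k) = x := ZMod.natCast_zmod_val x
  have hdy : ((d : ℕ) : ZMod k) = y := ZMod.natCast_zmod_val y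
  have hmod : c ≡ d [MOD m] := by
    have h1 : ((c : ℕ) : ZMod m) = ((d : ℕ) : ZMod m) := by
      calc ((c : ℕ) : ZMod m) = ZMod.castHom hdvd (ZMod m) x := by rw [← hcx, map_natCast]
        _ = ZMod.castHom hdvd (ZMod m) y := hxy
        _ = ((d : ℕ) : ZMod m) := by rw [← hdy, map_natCast]
    rwa [ZMod.natCast_eq_natCast_iff] at h1
  -- d + k ≥ c and m ∣ d + k - c
  have hck : c < k := ZMod.val_lt x
  have hle : c ≤ d + k := by omega
  have hmod2 : c ≡ d + k [MOD m] := by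
    calc c ≡ d [MOD m] := hmod
      _ ≡ d + 0 [MOD m] := by rw [add_zero]
      _ ≡ d + k [MOD m] := Nat.ModEq.add_left d (Nat.modEq_zero_iff_dvd.mpr hdvd).symm
  obtain ⟨j, hj⟩ := (Nat.modEq_iff_dvd' hle).mp hmod2
  have hy : y = x + ((j * m : ℕ) : ZMod k) := by
    rw [← hcx, ← hdy]
    have : ((d + k : ℕ) : ZMod k) = ((c + m * j : ℕ) : ZMod k) := by
      congr 1; omega
    push_cast at this ⊢
    rw [ZMod.natCast_self] at this
    rw [mul_comm]
    linear_combination this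
  rw [hy]
  exact closure_lemma k m A hA j x hx
/-- Reduction modulo `k/a` gives a bijection between `t`-element subsets of `ZMod k`
containing `0` invariant under translation by `k/a`, and `t/a`-element subsets of
`ZMod (k/a)` containing `0`. -/
theorem bijOn_reduction (k t a : ℕ) [NeZero k] (ht : 0 < t) (ha : 0 < a) (htk : t ≤ k)
    (hag : a ∣ Nat.gcd k t) (hdvd : k / a ∣ k) :
    Set.BijOn
      (fun A : Finset (ZMod k) => A.image (ZMod.castHom hdvd (ZMod (k / a))))
      {A : Finset (ZMod k) | A.card = t ∧ (0 : ZMod k) ∈ A ∧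
        A.image (· + ((k / a : ℕ) : ZMod k)) = A}
      {B : Finset (ZMod (k / a)) | B.card = t / a ∧ (0 : ZMod (k / a)) ∈ B} := by
  classical
  set m := k / a with hmdef
  have hak : a ∣ k := hag.trans (Nat.gcd_dvd_left _ _)
  have hat : a ∣ t := hag.trans (Nat.gcd_dvd_right _ _)
  have hkpos : 0 < k := Nat.pos_of_ne_zero (NeZero.ne k)
  have hk : k = m * a := by rw [hmdef, Nat.div_mul_cancel hak]
  have hm : 0 < m := by
    rcases Nat.eq_zero_or_pos m with h | h
    · rw [h, zero_mul] at hk; omega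
    · exact h
  haveI : NeZero m := ⟨hm.ne'⟩
  set φ := ZMod.castHom hdvd (ZMod m) with hφ
  set g : Finset (ZMod m) → Finset (ZMod k) :=
    fun B => Finset.univ.filter (fun x => φ x ∈ B) with hg
  -- key: A = g (A.image φ) for invariant A
  have key : ∀ A : Finset (ZMod k), A.image (· + ((m : ℕ) : ZMod k)) = A →
      g (A.image φ) = A := by
    intro A hA
    ext x
    simp only [hg, Finset.mem_filter, Finset.mem_univ, true_and, Finset.mem_image]
    constructor
    · rintro ⟨y, hy, hyx⟩
      exact fiber_mem k m a hm hk hdvd A hA hy hyx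
    · intro hx; exact ⟨x, hx, rfl⟩
  have hmapsTo : Set.MapsTo (fun A : Finset (ZMod k) => A.image φ)
      {A : Finset (ZMod k) | A.card = t ∧ (0 : ZMod k) ∈ A ∧
        A.image (· + ((m : ℕ) : ZMod k)) = A}
      {B : Finset (ZMod m) | B.card = t / a ∧ (0 : ZMod m) ∈ B} := by
    rintro A ⟨hcard, h0, hA⟩
    constructor
    · have h1 : (g (A.image φ)).card = a * (A.image φ).card :=
        count_filter k m a hm ha hk hdvd _
      rw [key A hA, hcard] at h1
      rw [h1, Nat.mul_div_cancel_left _ ha]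
    · exact Finset.mem_image.mpr ⟨0, h0, map_zero φ⟩
  have hmapsTo' : Set.MapsTo g
      {B : Finset (ZMod m) | B.card = t / a ∧ (0 : ZMod m) ∈ B}
      {A : Finset (ZMod k) | A.card = t ∧ (0 : ZMod k) ∈ A ∧
        A.image (· + ((m : ℕ) : ZMod k)) = A} := by
    rintro B ⟨hcard, h0⟩
    refine ⟨?_, ?_, ?_⟩
    · rw [hg]
      rw [count_filter k m a hm ha hk hdvd B, hcard, Nat.mul_div_cancel' hat]
    · simp only [hg, Finset.mem_filter, Finset.mem_univ, true_and, map_zero]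
      exact h0
    · have hsub : (g B).image (· + ((m : ℕ) : ZMod k)) ⊆ g B := by
        intro y hy
        obtain ⟨x, hx, rfl⟩ := Finset.mem_image.mp hy
        simp only [hg, Finset.mem_filter, Finset.mem_univ, true_and] at hx ⊢
        rwa [map_add, map_natCast, ZMod.natCast_self, add_zero]
      apply Finset.eq_of_subset_of_card_le hsub
      rw [Finset.card_image_of_injective _ (add_left_injective _)]
  refine Set.InvOn.bijOn ⟨?_, ?_⟩ hmapsTo hmapsTo'
  · rintro A ⟨hcard, h0, hA⟩
    exact key A hA
  · rintro B ⟨hcard, h0⟩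
    ext b
    simp only [Finset.mem_image, hg, Finset.mem_filter, Finset.mem_univ, true_and]
    constructor
    · rintro ⟨x, hx, rfl⟩; exact hx
    · intro hb
      refine ⟨((b.val : ℕ) : ZMod k), ?_, ?_⟩
      · rwa [map_natCast, ZMod.natCast_zmod_val]
      · rw [map_natCast, ZMod.natCast_zmod_val]
end
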